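/- Let n ≥ 3 and let K be a field of characteristic 0. There do not exist homogeneous polynomials h_{i,j} ∈ K[x,y,z,w] of degree 2n − 4 (for 1 ≤ i ≤ j ≤ 6) such that F_n = Σ_{1≤i≤j≤6} h_{i,j} g_i g_j, where F_n = (x^n - y^n)(x^n - z^n)(x^n - w^n)(y^n - z^n)(y^n - w^n)(z^n - w^n) and g_1, …, g_6 are the generators g_1 = (x^n - y^n)(z^n - w^n)xy, g_2 = (x^n - y^n)(z^n - w^n)zw, g_3 = (x^n - z^n)(y^n - w^n)xz, g_4 = (x^n - z^n)(y^n - w^n)yw, g_5 = (x^n - w^n)(y^n - z^n)xw, g_6 = (x^n - w^n)(y^n - z^n)yz. -/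

import Mathlib

open MvPolynomial

/-- The six generators of the ideal of the restricted Fermat configuration of lines in `ℙ³`,
with variables `x = X 0`, `y = X 1`, `z = X 2`, `w = X 3`. -/
noncomputable def fermatGen (K : Type*) [Field K] (n : ℕ) : Fin 6 → MvPolynomial (Fin 4) K
  | 0 => (X 0 ^ n - X 1 ^ n) * (X 2 ^ n - X 3 ^ n) * X 0 * X 1
  | 1 => (X 0 ^ n - X 1 ^ n) * (X 2 ^ n - X 3 ^ n) * X 2 * X 3
  | 2 => (X 0 ^ n - X 2 ^ n) * (X 1 ^ n - X 3 ^ n) * X 0 * X 2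
  | 3 => (X 0 ^ n - X 2 ^ n) * (X 1 ^ n - X 3 ^ n) * X 1 * X 3
  | 4 => (X 0 ^ n - X 3 ^ n) * (X 1 ^ n - X 2 ^ n) * X 0 * X 3
  | 5 => (X 0 ^ n - X 3 ^ n) * (X 1 ^ n - X 2 ^ n) * X 1 * X 2

namespace NoQuadRepAux

variable {K : Type*} [Field K]

noncomputable def EE : Fin 6 → (Fin 4 →₀ ℕ)
  | 0 => Finsupp.single 0 1 + Finsupp.single 1 1
  | 1 => Finsupp.single 2 1 + Finsupp.single 3 1
  | 2 => Finsupp.single 0 1 + Finsupp.single 2 1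
  | 3 => Finsupp.single 1 1 + Finsupp.single 3 1
  | 4 => Finsupp.single 0 1 + Finsupp.single 3 1
  | 5 => Finsupp.single 1 1 + Finsupp.single 2 1

noncomputable def QQ (K : Type*) [Field K] : Fin 6 → MvPolynomial (Fin 4) K
  | 0 => (X 0 - X 1) * (X 2 - X 3)
  | 1 => (X 0 - X 1) * (X 2 - X 3)
  | 2 => (X 0 - X 2) * (X 1 - X 3)
  | 3 => (X 0 - X 2) * (X 1 - X 3)
  | 4 => (X 0 - X 3) * (X 1 - X 2)
  | 5 => (X 0 - X 3) * (X 1 - X 2)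

lemma expand_monomial_smul (n : ℕ) (d : Fin 4 →₀ ℕ) (r : K) :
    expand n (monomial d r) = monomial (n • d) r := by
  rw [expand_monomial, monomial_eq]

lemma smul_finsupp_inj {n : ℕ} (hn : n ≠ 0) {u v : Fin 4 →₀ ℕ} (h : n • u = n • v) : u = v := by
  ext t
  have := congrArg (fun f => f t) h
  simp only [Finsupp.smul_apply, smul_eq_mul] at this
  exact Nat.eq_of_mul_eq_mul_left (Nat.pos_of_ne_zero hn) this

lemma coeff_expand_smul {n : ℕ} (hn : n ≠ 0) (p : MvPolynomial (Fin 4) K) (M : Fin 4 →₀ ℕ) :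
    coeff (n • M) (expand n p) = coeff M p := by
  induction p using MvPolynomial.induction_on' with
  | monomial u a =>
    rw [expand_monomial_smul, coeff_monomial, coeff_monomial]
    by_cases h : u = M
    · simp [h]
    · rw [if_neg (fun hh => h (smul_finsupp_inj hn hh)), if_neg h]
  | add p q hp hq => rw [map_add, coeff_add, coeff_add, hp, hq]

lemma coeff_expand_ne {n : ℕ} {p : MvPolynomial (Fin 4) K} {v : Fin 4 →₀ ℕ}
    (h : coeff v (expand n p) ≠ 0) : ∃ d, v = n • d := by
  induction p using MvPolynomial.induction_on' with
  | monomial u a =>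
    rw [expand_monomial_smul, coeff_monomial] at h
    refine ⟨u, ?_⟩
    by_contra hne
    exact h (if_neg fun hh => hne hh.symm)
  | add p q hp hq =>
    rw [map_add, coeff_add] at h
    rcases (by by_contra hc; push_neg at hc; simp [hc.1, hc.2] at h :
        coeff v (expand n p) ≠ 0 ∨ coeff v (expand n q) ≠ 0) with h' | h'
    · exact hp h'
    · exact hq h'

lemma gen_eq (n : ℕ) (i : Fin 6) :
    fermatGen K n i = expand n (QQ K i) * monomial (EE i) 1 := by
  have hX : ∀ a b : Fin 4, (monomial (Finsupp.single a 1 + Finsupp.single b 1) (1 : K))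
      = X a * X b := by
    intro a b
    rw [X, X, monomial_mul, one_mul]
  fin_cases i <;>
    simp only [fermatGen, QQ, EE, map_mul, map_sub, expand_X, hX] <;> ring

lemma coeff_gen_ne {n : ℕ} {i : Fin 6} {v : Fin 4 →₀ ℕ}
    (h : coeff v (fermatGen K n i) ≠ 0) : ∃ d, v = n • d + EE i := by
  rw [gen_eq, coeff_mul_monomial'] at h
  split_ifs at h with hle
  · rw [mul_one] at h
    obtain ⟨d, hd⟩ := coeff_expand_ne h
    exact ⟨d, by rw [← hd, tsub_add_cancel_of_le hle]⟩
  · exact absurd rfl h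

lemma coeff_gen_mul_ne {n : ℕ} {i j : Fin 6} {v : Fin 4 →₀ ℕ}
    (h : coeff v (fermatGen K n i * fermatGen K n j) ≠ 0) :
    ∃ d, v = n • d + (EE i + EE j) := by
  rw [coeff_mul] at h
  obtain ⟨⟨u, w⟩, hmem, hne⟩ := Finset.exists_ne_zero_of_sum_ne_zero h
  rw [Finset.HasAntidiagonal.mem_antidiagonal] at hmem
  obtain ⟨d1, hd1⟩ := coeff_gen_ne (left_ne_zero_of_mul hne)
  obtain ⟨d2, hd2⟩ := coeff_gen_ne (right_ne_zero_of_mul hne)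
  refine ⟨d1 + d2, ?_⟩
  rw [← hmem, hd1, hd2, smul_add]
  abel

lemma coord_lb {n a b c M : ℕ} (hn : 3 ≤ n) (hc0 : 0 < c) (hc2 : c ≤ 2)
    (heq : a + (n * b + c) = n * M) : n - c ≤ a := by
  have h1 : n * b ≤ n * M := by omega
  have hb : b ≤ M := Nat.le_of_mul_le_mul_left h1 (by omega)
  obtain ⟨k, rfl⟩ : ∃ k, M = b + k := ⟨M - b, by omega⟩
  rw [Nat.mul_add] at heq
  have hk : a + c = n * k := by omega
  rcases Nat.eq_zero_or_pos k with rfl | hk1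
  · simp at hk; omega
  · have : n ≤ n * k := Nat.le_mul_of_pos_right n hk1
    omega

lemma off_contr {n : ℕ} (hn : 3 ≤ n) {u v M e : Fin 4 →₀ ℕ}
    (hsum : ∑ t : Fin 4, u t = 2 * n - 4)
    (hadd : u + v = n • M)
    (hv : ∃ d, v = n • d + e)
    (hle : ∀ t, e t ≤ 2)
    (hbig : 2 * n - 4 < ∑ t : Fin 4, (if e t = 0 then 0 else n - e t)) : False := by
  obtain ⟨d, rfl⟩ := hv
  have hlb : ∀ t : Fin 4, (if e t = 0 then 0 else n - e t) ≤ u t := by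
    intro t
    have ht : u t + (n * d t + e t) = n * M t := by
      have := congrArg (fun f => f t) hadd
      simpa [Finsupp.add_apply, Finsupp.smul_apply, Nat.smul_one_eq_cast] using this
    by_cases h0 : e t = 0
    · simp [h0]
    · rw [if_neg h0]
      exact coord_lb hn (Nat.pos_of_ne_zero h0) (hle t) ht
  have := Finset.sum_le_sum (fun t (_ : t ∈ Finset.univ) => hlb t)
  omega

lemma diag_determine {n : ℕ} (hn : 3 ≤ n) {u v M : Fin 4 →₀ ℕ} {a b : Fin 4} (hab : a ≠ b)
    (hsum : ∑ t : Fin 4, u t = 2 * n - 4)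
    (hadd : u + v = n • M)
    (hv : ∃ d, v = n • d + ((Finsupp.single a 1 + Finsupp.single b 1)
      + (Finsupp.single a 1 + Finsupp.single b 1))) :
    u = (n - 2) • (Finsupp.single a 1 + Finsupp.single b 1) := by
  obtain ⟨d, rfl⟩ := hv
  set e : Fin 4 →₀ ℕ := (Finsupp.single a 1 + Finsupp.single b 1)
      + (Finsupp.single a 1 + Finsupp.single b 1) with he
  have het : ∀ t, e t = (if t = a then 2 else 0) + (if t = b then 2 else 0) := by
    intro t
    simp only [he, Finsupp.add_apply, Finsupp.single_apply]
    split_ifs <;> subst_vars <;> first | omega | exact absurd rfl (by assumption)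
  have hcoord : ∀ t : Fin 4, u t + (n * d t + e t) = n * M t := by
    intro t
    have := congrArg (fun f => f t) hadd
    simpa [Finsupp.add_apply, Finsupp.smul_apply] using this
  have hua : n - 2 ≤ u a := by
    have h := hcoord a
    rw [het a, if_pos rfl, if_neg hab, add_zero] at h
    exact coord_lb hn (by norm_num) (by norm_num) h
  have hub : n - 2 ≤ u b := by
    have h := hcoord b
    rw [het b, if_neg (Ne.symm hab), if_pos rfl, zero_add] at h
    exact coord_lb hn (by norm_num) (by norm_num) h
  have hpair : u a + u b ≤ ∑ t : Fin 4, u t := by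
    have hsub : ({a, b} : Finset (Fin 4)) ⊆ Finset.univ := Finset.subset_univ _
    have := Finset.sum_le_sum_of_subset hsub (f := fun t => u t)
    rwa [Finset.sum_pair hab] at this
  have huab : u a = n - 2 ∧ u b = n - 2 := by omega
  have hrest : ∀ t : Fin 4, t ≠ a → t ≠ b → u t = 0 := by
    intro t hta htb
    by_contra h0
    have h1 : u a + (u b + u t) ≤ ∑ s : Fin 4, u s := by
      have hsub : ({a, b, t} : Finset (Fin 4)) ⊆ Finset.univ := Finset.subset_univ _
      have h2 := Finset.sum_le_sum_of_subset hsub (f := fun s => u s)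
      rwa [Finset.sum_insert (by simp [hab, Ne.symm hta]),
        Finset.sum_pair (Ne.symm htb)] at h2
    omega
  ext t
  rcases eq_or_ne t a with rfl | h1
  · simp [Finsupp.single_apply, (Ne.symm hab : b ≠ t), huab.1]
  · rcases eq_or_ne t b with rfl | h2
    · simp [Finsupp.single_apply, hab, huab.2]
    · simp [Finsupp.single_apply, Ne.symm h1, Ne.symm h2, hrest t h1 h2]

lemma sum_u {m : ℕ} {h : MvPolynomial (Fin 4) K} (hh : h.IsHomogeneous m) {u : Fin 4 →₀ ℕ}
    (hcu : coeff u h ≠ 0) : ∑ t : Fin 4, u t = m := by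
  have h2 : u.degree = m := by rw [Finsupp.degree_eq_weight_one]; exact hh hcu
  rw [← h2, Finsupp.degree]
  exact (Finset.sum_subset (Finset.subset_univ _)
    (fun x _ hx => Finsupp.notMem_support_iff.mp hx)).symm

lemma EE_le2 (i j : Fin 6) (t : Fin 4) : (EE i + EE j) t ≤ 2 := by
  fin_cases i <;> fin_cases j <;> fin_cases t <;>
    simp [EE, Finsupp.single_apply] <;> omega

lemma EE_big {n : ℕ} (hn : 3 ≤ n) {i j : Fin 6} (hij : i ≠ j) :
    2 * n - 4 < ∑ t : Fin 4, (if (EE i + EE j) t = 0 then 0 else n - (EE i + EE j) t) := by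
  fin_cases i <;> fin_cases j <;>
    first
    | exact absurd rfl hij
    | (simp [EE, Finsupp.single_apply, Fin.sum_univ_four]; omega)

lemma term_offdiag {n : ℕ} (hn : 3 ≤ n) {h : MvPolynomial (Fin 4) K}
    (hh : h.IsHomogeneous (2 * n - 4)) {i j : Fin 6} (hij : i ≠ j) (M : Fin 4 →₀ ℕ) :
    coeff (n • M) (h * (fermatGen K n i * fermatGen K n j)) = 0 := by
  rw [coeff_mul]
  apply Finset.sum_eq_zero
  rintro ⟨u, v⟩ hmem
  rw [Finset.HasAntidiagonal.mem_antidiagonal] at hmem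
  by_contra hnz
  exact off_contr hn (sum_u hh (left_ne_zero_of_mul hnz)) hmem
    (coeff_gen_mul_ne (right_ne_zero_of_mul hnz)) (EE_le2 i j) (EE_big hn hij)

lemma diag_determine' {n : ℕ} (hn : 3 ≤ n) (i : Fin 6) {u v M : Fin 4 →₀ ℕ}
    (hsum : ∑ t : Fin 4, u t = 2 * n - 4)
    (hadd : u + v = n • M)
    (hv : ∃ d, v = n • d + (EE i + EE i)) :
    u = (n - 2) • EE i := by
  fin_cases i <;> simp only [EE] at hv ⊢ <;>
    exact diag_determine hn (by decide) hsum hadd hv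

lemma term_diag {n : ℕ} (hn : 3 ≤ n) {h : MvPolynomial (Fin 4) K}
    (hh : h.IsHomogeneous (2 * n - 4)) (i : Fin 6) (M : Fin 4 →₀ ℕ) :
    coeff (n • M) (h * (fermatGen K n i * fermatGen K n i)) =
      coeff ((n - 2) • EE i) h *
        coeff (n • M) (monomial ((n - 2) • EE i) (1 : K) *
          (fermatGen K n i * fermatGen K n i)) := by
  set mE : Fin 4 →₀ ℕ := (n - 2) • EE i with hmE
  rw [coeff_mul, coeff_monomial_mul']
  by_cases hle : mE ≤ n • M
  · rw [if_pos hle, one_mul]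
    apply Finset.sum_eq_single_of_mem (mE, n • M - mE)
    · rw [Finset.HasAntidiagonal.mem_antidiagonal]
      exact add_tsub_cancel_of_le hle
    · rintro ⟨u, v⟩ hmem hne
      rw [Finset.HasAntidiagonal.mem_antidiagonal] at hmem
      by_contra hnz
      have hu : u = mE := diag_determine' hn i (sum_u hh (left_ne_zero_of_mul hnz)) hmem
        (coeff_gen_mul_ne (right_ne_zero_of_mul hnz))
      apply hne
      have hv : v = n • M - mE := by
        rw [← hmem, hu, add_tsub_cancel_left]
      rw [hu, hv]
  · rw [if_neg hle, mul_zero]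
    apply Finset.sum_eq_zero
    rintro ⟨u, v⟩ hmem
    rw [Finset.HasAntidiagonal.mem_antidiagonal] at hmem
    by_contra hnz
    have hu : u = mE := diag_determine' hn i (sum_u hh (left_ne_zero_of_mul hnz)) hmem
      (coeff_gen_mul_ne (right_ne_zero_of_mul hnz))
    exact hle (by rw [← hmem, hu]; exact le_self_add)

lemma mon_gen_sq {n : ℕ} (hn : 3 ≤ n) (i : Fin 6) :
    monomial ((n - 2) • EE i) (1 : K) * (fermatGen K n i * fermatGen K n i) =
      expand n (QQ K i * QQ K i * monomial (EE i) 1) := by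
  rw [gen_eq, map_mul, map_mul, expand_monomial_smul]
  have hE : (n - 2) • EE i + (EE i + EE i) = n • EE i := by
    ext t
    simp only [Finsupp.add_apply, Finsupp.smul_apply, smul_eq_mul]
    have h2 : n - 2 + 2 = n := by omega
    calc (n - 2) * EE i t + (EE i t + EE i t) = (n - 2 + 2) * EE i t := by ring
    _ = n * EE i t := by rw [h2]
  calc monomial ((n - 2) • EE i) (1 : K) *
        (expand n (QQ K i) * monomial (EE i) 1 * (expand n (QQ K i) * monomial (EE i) 1))
      = expand n (QQ K i) * expand n (QQ K i) *
          (monomial ((n - 2) • EE i) 1 * monomial (EE i) 1 * monomial (EE i) (1 : K)) := by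
        ring
    _ = expand n (QQ K i) * expand n (QQ K i) * monomial (n • EE i) 1 := by
        rw [monomial_mul, monomial_mul, one_mul, one_mul, add_assoc, hE]

lemma reduction {n : ℕ} (hn : 3 ≤ n) (h : Fin 6 → Fin 6 → MvPolynomial (Fin 4) K)
    (hhom : ∀ i j : Fin 6, i ≤ j → (h i j).IsHomogeneous (2 * n - 4))
    (heq : (X 0 ^ n - X 1 ^ n) * (X 0 ^ n - X 2 ^ n) * (X 0 ^ n - X 3 ^ n) *
          (X 1 ^ n - X 2 ^ n) * (X 1 ^ n - X 3 ^ n) * (X 2 ^ n - X 3 ^ n) =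
        ∑ i : Fin 6, ∑ j ∈ Finset.univ.filter (fun j => i ≤ j),
          h i j * fermatGen K n i * fermatGen K n j) :
    (X 0 - X 1) * (X 0 - X 2) * (X 0 - X 3) * (X 1 - X 2) * (X 1 - X 3) * (X 2 - X 3) =
      ∑ i : Fin 6, C (coeff ((n - 2) • EE i) (h i i)) *
        (QQ K i * QQ K i * monomial (EE i) 1) := by
  have hne : n ≠ 0 := by omega
  apply MvPolynomial.ext
  intro M
  have hF : expand n ((X 0 - X 1) * (X 0 - X 2) * (X 0 - X 3) * (X 1 - X 2) * (X 1 - X 3) *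
      (X 2 - X 3) : MvPolynomial (Fin 4) K) =
      (X 0 ^ n - X 1 ^ n) * (X 0 ^ n - X 2 ^ n) * (X 0 ^ n - X 3 ^ n) *
        (X 1 ^ n - X 2 ^ n) * (X 1 ^ n - X 3 ^ n) * (X 2 ^ n - X 3 ^ n) := by
    simp [map_mul, map_sub, expand_X]
  calc coeff M ((X 0 - X 1) * (X 0 - X 2) * (X 0 - X 3) * (X 1 - X 2) * (X 1 - X 3) *
        (X 2 - X 3) : MvPolynomial (Fin 4) K)
      = coeff (n • M) (∑ i : Fin 6, ∑ j ∈ Finset.univ.filter (fun j => i ≤ j),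
          h i j * fermatGen K n i * fermatGen K n j) := by
        rw [← heq, ← hF, coeff_expand_smul hne]
    _ = ∑ i : Fin 6, ∑ j ∈ Finset.univ.filter (fun j => i ≤ j),
          coeff (n • M) (h i j * fermatGen K n i * fermatGen K n j) := by
        rw [coeff_sum]
        exact Finset.sum_congr rfl fun i _ => coeff_sum _ _ _
    _ = ∑ i : Fin 6, coeff ((n - 2) • EE i) (h i i) *
          coeff M (QQ K i * QQ K i * monomial (EE i) 1) := by
        refine Finset.sum_congr rfl fun i _ => ?_
        rw [Finset.sum_eq_single_of_mem i (by simp)]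
        · rw [mul_assoc, term_diag hn (hhom i i le_rfl) i M, mon_gen_sq hn,
            coeff_expand_smul hne]
        · intro j hj hji
          rw [mul_assoc]
          exact term_offdiag hn (hhom i j (Finset.mem_filter.mp hj).2) (Ne.symm hji) M
    _ = coeff M (∑ i : Fin 6, C (coeff ((n - 2) • EE i) (h i i)) *
          (QQ K i * QQ K i * monomial (EE i) 1)) := by
        rw [coeff_sum]
        exact Finset.sum_congr rfl fun i _ => (coeff_C_mul _ _ _).symm

lemma no_rep [CharZero K] (c : Fin 6 → K)
    (hid : ((X 0 - X 1) * (X 0 - X 2) * (X 0 - X 3) * (X 1 - X 2) * (X 1 - X 3) * (X 2 - X 3)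
        : MvPolynomial (Fin 4) K) =
      ∑ i : Fin 6, C (c i) * (QQ K i * QQ K i * monomial (EE i) 1)) : False := by
  have hX : ∀ a b : Fin 4, (monomial (Finsupp.single a 1 + Finsupp.single b 1) (1 : K))
      = X a * X b := fun a b => by rw [X, X, monomial_mul, one_mul]
  rw [Fin.sum_univ_six] at hid
  simp only [QQ, EE, hX] at hid
  have e1 := congrArg (eval ![(1 : K), 2, 3, 1]) hid
  have e2 := congrArg (eval ![(3 : K), 2, 1, 1]) hid
  have e3 := congrArg (eval ![(1 : K), 2, 3, 4]) hid
  have e4 := congrArg (eval ![(1 : K), 2, 3, 0]) hid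
  have e5 := congrArg (eval ![(1 : K), 0, 1, 2]) hid
  simp only [map_mul, map_sub, map_add, eval_X, eval_C, Matrix.cons_val_zero,
    Matrix.cons_val_one, Matrix.head_cons, Matrix.cons_val_two, Matrix.cons_val_three,
    Matrix.tail_cons] at e1 e2 e3 e4 e5
  norm_num at e1 e2 e3 e4 e5
  have : (1 : K) = 0 := by
    linear_combination (7 / 24 : K) * e1 + (3 / 8 : K) * e2 - (1 / 24 : K) * e3
      - (1 / 8 : K) * e4 - (3 / 2 : K) * e5
  exact one_ne_zero this

end NoQuadRepAux

theorem no_quadratic_representation (K : Type*) [Field K] [CharZero K] (n : ℕ) (hn : 3 ≤ n) :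
    ¬ ∃ h : Fin 6 → Fin 6 → MvPolynomial (Fin 4) K,
      (∀ i j : Fin 6, i ≤ j → (h i j).IsHomogeneous (2 * n - 4)) ∧
      (X 0 ^ n - X 1 ^ n) * (X 0 ^ n - X 2 ^ n) * (X 0 ^ n - X 3 ^ n) *
          (X 1 ^ n - X 2 ^ n) * (X 1 ^ n - X 3 ^ n) * (X 2 ^ n - X 3 ^ n) =
        ∑ i : Fin 6, ∑ j ∈ Finset.univ.filter (fun j => i ≤ j),
          h i j * fermatGen K n i * fermatGen K n j := by
  rintro ⟨h, hhom, heq⟩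
  exact NoQuadRepAux.no_rep _ (NoQuadRepAux.reduction hn h hhom heq)
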